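/- With notation as above, let δ(s) be the common gcd of A^{[e]}(s) and 1 − A s^h, and define the opposite denominator polynomial Δ^{op}(s) := (1 − A s^h)/δ(s) and b^{[e]}(s) := A^{[e]}(s)/δ(s). Then the polynomials b^{[e]}(s), e ∈ ℤ/hℤ, span the K-vector space of polynomials of degree < deg Δ^{op}. Consequently, the rank of the h×h coefficient matrix M_h := (∏_{i=1}^{f} a_1^{[e−i+1]})_{e,f ∈ {0,…,h−1}} equals deg Δ^{op}(s). -/

import Mathlib

open Finset Polynomial

/-- The numerator polynomial `A^{[e]}(s) = ∑_{j<h} (∏_{i<j} a₁^{[e-i]}) sʲ`. -/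
noncomputable def Apoly {K : Type*} [Field K] (h : ℕ) (a1 : ZMod h → K) (e : ZMod h) :
    Polynomial K :=
  ∑ j ∈ Finset.range h, Polynomial.C (∏ i ∈ Finset.range j, a1 (e - (i : ℕ))) * Polynomial.X ^ j

/-- The constant `A = ∏_{i<h} a₁^{[i]}`. -/
noncomputable def Aconst {K : Type*} [Field K] (h : ℕ) (a1 : ZMod h → K) : K :=
  ∏ i ∈ Finset.range h, a1 (i : ℕ)

/-- The polynomial `1 - A sʰ`. -/
noncomputable def cycPoly {K : Type*} [Field K] (h : ℕ) (a1 : ZMod h → K) : Polynomial K :=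
  1 - Polynomial.C (Aconst h a1) * Polynomial.X ^ h

section Helpers

variable {K : Type*} [Field K] {h : ℕ} (a1 : ZMod h → K)

lemma prod_range_zmod [NeZero h] (f : ZMod h → K) :
    ∏ i ∈ Finset.range h, f ((i : ℕ) : ZMod h) = ∏ x : ZMod h, f x := by
  refine Finset.prod_nbij' (fun i => ((i : ℕ) : ZMod h)) (fun x => x.val) ?_ ?_ ?_ ?_ ?_
  · intro a _; exact Finset.mem_univ _
  · intro x _; exact Finset.mem_range.mpr (ZMod.val_lt x)
  · intro a ha; exact ZMod.val_cast_of_lt (Finset.mem_range.mp ha)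
  · intro x _; exact ZMod.natCast_rightInverse x
  · intro a _; rfl

lemma prod_cyc [NeZero h] (c : ZMod h) :
    ∏ i ∈ Finset.range h, a1 (c - (i : ℕ)) = Aconst h a1 := by
  rw [Aconst, prod_range_zmod (fun x => a1 (c - x)), prod_range_zmod a1]
  exact Fintype.prod_equiv (Equiv.subLeft c) _ _ (fun x => rfl)

lemma apoly_rec [NeZero h] (e : ZMod h) :
    Polynomial.C (a1 (e + 1)) * (Polynomial.X * Apoly h a1 e) + cycPoly h a1
      = Apoly h a1 (e + 1) := by
  have key : ∀ j : ℕ, a1 (e + 1) * (∏ i ∈ Finset.range j, a1 (e - (i : ℕ)))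
      = ∏ i ∈ Finset.range (j + 1), a1 (e + 1 - (i : ℕ)) := by
    intro j
    rw [Finset.prod_range_succ' (fun i => a1 (e + 1 - (i : ℕ)))]
    rw [mul_comm]
    congr 1
    · refine Finset.prod_congr rfl fun i _ => ?_
      congr 1
      push_cast
      ring
    · congr 1
      push_cast
      ring
  have main : Polynomial.C (a1 (e + 1)) * (Polynomial.X * Apoly h a1 e)
      = Apoly h a1 (e + 1) + Polynomial.C (Aconst h a1) * Polynomial.X ^ h - 1 := by
    calc Polynomial.C (a1 (e + 1)) * (Polynomial.X * Apoly h a1 e)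
        = ∑ j ∈ Finset.range h,
            Polynomial.C (∏ i ∈ Finset.range (j + 1), a1 (e + 1 - (i : ℕ)))
              * Polynomial.X ^ (j + 1) := by
          rw [Apoly, Finset.mul_sum, Finset.mul_sum]
          refine Finset.sum_congr rfl fun j _ => ?_
          rw [← key j, Polynomial.C_mul]
          ring
      _ = ∑ j ∈ Finset.range (h + 1),
            Polynomial.C (∏ i ∈ Finset.range j, a1 (e + 1 - (i : ℕ))) * Polynomial.X ^ j
            - Polynomial.C (∏ i ∈ Finset.range 0, a1 (e + 1 - (i : ℕ)))
              * Polynomial.X ^ 0 := by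
          rw [Finset.sum_range_succ'
            (fun j => Polynomial.C (∏ i ∈ Finset.range j, a1 (e + 1 - (i : ℕ)))
              * Polynomial.X ^ j)]
          ring
      _ = Apoly h a1 (e + 1) + Polynomial.C (Aconst h a1) * Polynomial.X ^ h - 1 := by
          rw [Finset.sum_range_succ, prod_cyc, Apoly]
          simp
  rw [main, cycPoly]
  ring

lemma apoly_degree_lt (e : ZMod h) : (Apoly h a1 e).degree < (h : ℕ) := by
  refine lt_of_le_of_lt (Polynomial.degree_sum_le _ _) ?_
  rw [Finset.sup_lt_iff (by exact WithBot.bot_lt_coe _)]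
  intro j hj
  apply lt_of_le_of_lt (Polynomial.degree_mul_le _ _)
  apply lt_of_le_of_lt (add_le_add Polynomial.degree_C_le (Polynomial.degree_X_pow_le j))
  rw [zero_add]
  exact_mod_cast Finset.mem_range.mp hj

lemma cycPoly_degree (hpos : 0 < h) (hA : Aconst h a1 ≠ 0) :
    (cycPoly h a1).degree = (h : ℕ) := by
  rw [cycPoly, Polynomial.degree_sub_eq_right_of_degree_lt, Polynomial.degree_C_mul_X_pow _ hA]
  rw [Polynomial.degree_C_mul_X_pow _ hA]
  exact lt_of_le_of_lt Polynomial.degree_one_le (by exact_mod_cast hpos)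

lemma cycPoly_ne_zero (hpos : 0 < h) (hA : Aconst h a1 ≠ 0) : cycPoly h a1 ≠ 0 := by
  intro h0
  have := cycPoly_degree a1 hpos hA
  rw [h0, Polynomial.degree_zero] at this
  simp at this

end Helpers

set_option maxHeartbeats 2000000 in
open Classical in
/-- With `δ = gcd(A^{[e]}, 1 − A sʰ)` and `Δ^{op} = (1 − A sʰ)/δ`, the polynomials
    `b^{[e]} = A^{[e]}/δ` span the space of polynomials of degree `< deg Δ^{op}`;
    consequently the coefficient matrix `M_h` has rank `deg Δ^{op}`. -/
theorem span_b_and_rank {K : Type*} [Field K] (h : ℕ) (hpos : 0 < h)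
    (a1 : ZMod h → K) (ha1 : ∀ e, a1 e ≠ 0) :
    (Submodule.span K
        (Set.range fun e : ZMod h =>
          Apoly h a1 e / EuclideanDomain.gcd (Apoly h a1 0) (cycPoly h a1))
      = Polynomial.degreeLT K
          ((cycPoly h a1 / EuclideanDomain.gcd (Apoly h a1 0) (cycPoly h a1)).natDegree)) ∧
    Matrix.rank
        (Matrix.of fun e f : Fin h =>
          ∏ i ∈ Finset.range (f : ℕ), a1 (((e : ℕ) : ZMod h) - (i : ℕ)))
      = (cycPoly h a1 / EuclideanDomain.gcd (Apoly h a1 0) (cycPoly h a1)).natDegree := by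
  have : NeZero h := ⟨hpos.ne'⟩
  obtain ⟨δ, hδdef⟩ : ∃ p, EuclideanDomain.gcd (Apoly h a1 0) (cycPoly h a1) = p := ⟨_, rfl⟩
  rw [hδdef]
  obtain ⟨Δ, hΔdef⟩ : ∃ p, cycPoly h a1 / δ = p := ⟨_, rfl⟩
  rw [hΔdef]
  obtain ⟨b, hbdef⟩ : ∃ f : ZMod h → K[X], (fun e : ZMod h => Apoly h a1 e / δ) = f := ⟨_, rfl⟩
  rw [hbdef]
  obtain ⟨d, hddef⟩ : ∃ n, Δ.natDegree = n := ⟨_, rfl⟩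
  rw [hddef]
  have hA : Aconst h a1 ≠ 0 := Finset.prod_ne_zero_iff.mpr fun i _ => ha1 _
  have hC0 : cycPoly h a1 ≠ 0 := cycPoly_ne_zero a1 hpos hA
  have hδ0 : δ ≠ 0 := fun h0 => hC0 (EuclideanDomain.gcd_eq_zero_iff.mp (hδdef.trans h0)).2
  have hδC : δ ∣ cycPoly h a1 := hδdef ▸ EuclideanDomain.gcd_dvd_right _ _
  have hmulΔ : δ * Δ = cycPoly h a1 := by
    rw [← hΔdef]
    exact EuclideanDomain.mul_div_cancel' hδ0 hδC
  have hΔ0 : Δ ≠ 0 := by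
    intro h0
    rw [h0, mul_zero] at hmulΔ
    exact hC0 hmulΔ.symm
  -- divisibility of all Apoly by δ
  have hdvdN : ∀ n : ℕ, δ ∣ Apoly h a1 ((n : ℕ) : ZMod h) := by
    intro n
    induction n with
    | zero =>
      rw [Nat.cast_zero, ← hδdef]
      exact EuclideanDomain.gcd_dvd_left _ _
    | succ n ih =>
      have hcast : (((n + 1 : ℕ)) : ZMod h) = ((n : ℕ) : ZMod h) + 1 := by push_cast; ring
      rw [hcast, ← apoly_rec]
      exact dvd_add ((ih.mul_left Polynomial.X).mul_left _) hδC
  have hdvd : ∀ e : ZMod h, δ ∣ Apoly h a1 e := by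
    intro e
    obtain ⟨n, rfl⟩ := ZMod.natCast_zmod_surjective e
    exact hdvdN n
  have hmulb : ∀ e : ZMod h, δ * b e = Apoly h a1 e := fun e => by
    rw [← congrFun hbdef e]
    exact EuclideanDomain.mul_div_cancel' hδ0 (hdvd e)
  -- degree facts
  have hdegΔ : Δ.degree = (d : ℕ) := by
    rw [Polynomial.degree_eq_natDegree hΔ0, hddef]
  have hbd : ∀ e : ZMod h, (b e).degree < (d : ℕ) := by
    intro e
    have h1 : δ.degree + (b e).degree < δ.degree + Δ.degree := by
      rw [← Polynomial.degree_mul, ← Polynomial.degree_mul, hmulb e, hmulΔ]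
      exact lt_of_lt_of_le (apoly_degree_lt a1 e) (le_of_eq (cycPoly_degree a1 hpos hA).symm)
    rw [← hdegΔ]
    exact lt_of_add_lt_add_left h1
  have hbmem : ∀ e : ZMod h, b e ∈ Polynomial.degreeLT K d := fun e =>
    Polynomial.mem_degreeLT.mpr (hbd e)
  -- the recurrence for b
  have hbrec : ∀ e : ZMod h,
      Polynomial.C (a1 (e + 1)) * (Polynomial.X * b e) + Δ = b (e + 1) := by
    intro e
    apply mul_left_cancel₀ hδ0
    rw [mul_add, hmulΔ, hmulb]
    calc δ * (Polynomial.C (a1 (e + 1)) * (Polynomial.X * b e)) + cycPoly h a1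
        = Polynomial.C (a1 (e + 1)) * (Polynomial.X * (δ * b e)) + cycPoly h a1 := by ring
      _ = Apoly h a1 (e + 1) := by rw [hmulb, apoly_rec]
  -- coprimality (Bezout)
  have hcop : ∃ u v : K[X], u * b 0 + v * Δ = 1 := by
    refine ⟨EuclideanDomain.gcdA (Apoly h a1 0) (cycPoly h a1),
      EuclideanDomain.gcdB (Apoly h a1 0) (cycPoly h a1), ?_⟩
    apply mul_left_cancel₀ hδ0
    rw [mul_one]
    calc δ * (EuclideanDomain.gcdA (Apoly h a1 0) (cycPoly h a1) * b 0
          + EuclideanDomain.gcdB (Apoly h a1 0) (cycPoly h a1) * Δ)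
        = EuclideanDomain.gcdA (Apoly h a1 0) (cycPoly h a1) * (δ * b 0)
          + EuclideanDomain.gcdB (Apoly h a1 0) (cycPoly h a1) * (δ * Δ) := by ring
      _ = EuclideanDomain.gcdA (Apoly h a1 0) (cycPoly h a1) * Apoly h a1 0
          + EuclideanDomain.gcdB (Apoly h a1 0) (cycPoly h a1) * cycPoly h a1 := by
          rw [hmulb, hmulΔ]
      _ = Apoly h a1 0 * EuclideanDomain.gcdA (Apoly h a1 0) (cycPoly h a1)
          + cycPoly h a1 * EuclideanDomain.gcdB (Apoly h a1 0) (cycPoly h a1) := by ring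
      _ = δ := by rw [← hδdef]; exact (EuclideanDomain.gcd_eq_gcd_ab _ _).symm
  -- quotient setup
  set I : Ideal K[X] := Ideal.span {Δ} with hIdef
  set π : K[X] →ₐ[K] (K[X] ⧸ I) := Ideal.Quotient.mkₐ K I with hπdef
  have hπΔ : π Δ = 0 := by
    rw [hπdef, Ideal.Quotient.mkₐ_eq_mk, Ideal.Quotient.eq_zero_iff_mem]
    exact Ideal.subset_span rfl
  have hker : ∀ p : K[X], π p = 0 → Δ ∣ p := by
    intro p hp
    rw [hπdef, Ideal.Quotient.mkₐ_eq_mk, Ideal.Quotient.eq_zero_iff_mem,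
      hIdef, Ideal.mem_span_singleton] at hp
    exact hp
  have hinj : ∀ p ∈ Polynomial.degreeLT K d, π p = 0 → p = 0 := by
    intro p hp h0
    refine Polynomial.eq_zero_of_dvd_of_degree_lt (hker p h0) ?_
    rw [hdegΔ]
    exact Polynomial.mem_degreeLT.mp hp
  -- the scalar factors
  set c : ℕ → K := fun n => ∏ i ∈ Finset.range n, a1 (((i : ℕ) : ZMod h) + 1) with hcdef
  have hc0 : ∀ n, c n ≠ 0 := fun n => Finset.prod_ne_zero_iff.mpr fun i _ => ha1 _
  have hπb : ∀ n : ℕ, π (b ((n : ℕ) : ZMod h)) = π (Polynomial.C (c n)) * π Polynomial.X ^ n * π (b 0) := by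
    intro n
    induction n with
    | zero => simp [hcdef]
    | succ n ih =>
      have hcast : (((n + 1 : ℕ)) : ZMod h) = ((n : ℕ) : ZMod h) + 1 := by push_cast; ring
      rw [hcast, ← hbrec, map_add, hπΔ, add_zero, map_mul, map_mul, ih]
      have : c (n + 1) = c n * a1 (((n : ℕ) : ZMod h) + 1) := by
        rw [hcdef]; exact Finset.prod_range_succ _ n
      rw [this, Polynomial.C_mul, map_mul, pow_succ]
      ring
  -- span of the images is everything
  have hspanQ : Submodule.span K (Set.range fun e : ZMod h => π (b e)) = ⊤ := by
    rw [eq_top_iff]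
    rintro q -
    obtain ⟨u, v, huv⟩ := hcop
    obtain ⟨p, rfl⟩ := Ideal.Quotient.mkₐ_surjective K I q
    have hq1 : π u * π (b 0) + π v * π Δ = 1 := by
      rw [← map_mul, ← map_mul, ← map_add, huv, map_one]
    rw [hπΔ, mul_zero, add_zero] at hq1
    -- reduce p * u mod Δ
    set r := (p * u) % Δ with hrdef
    have hdr : r.degree < Δ.degree := EuclideanDomain.mod_lt _ hΔ0
    have hπr : π r = π (p * u) := by
      have := EuclideanDomain.div_add_mod (p * u) Δ
      calc π r = π (Δ * ((p * u) / Δ) + r) := by rw [map_add, map_mul, hπΔ, zero_mul, zero_add]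
        _ = π (p * u) := by rw [this]
    have hrd : r.natDegree < d ∨ r = 0 := by
      by_cases hr0 : r = 0
      · exact Or.inr hr0
      · exact Or.inl (hddef ▸ Polynomial.natDegree_lt_natDegree hr0 hdr)
    have hπp : π p = π r * π (b 0) := by
      calc π p = π p * 1 := (mul_one _).symm
        _ = π p * (π u * π (b 0)) := by rw [hq1]
        _ = π (p * u) * π (b 0) := by rw [map_mul]; ring
        _ = π r * π (b 0) := by rw [hπr]
    rcases hrd with hrd | hr0
    · have hrsum : r = ∑ j ∈ Finset.range d, Polynomial.monomial j (r.coeff j) :=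
        Polynomial.as_sum_range' r d hrd
      rw [hπp, hrsum]
      rw [map_sum, Finset.sum_mul]
      refine Submodule.sum_mem _ fun j _ => ?_
      have hmon : (Polynomial.monomial j (r.coeff j) : K[X])
          = Polynomial.C (r.coeff j) * Polynomial.X ^ j := by
        rw [Polynomial.C_mul_X_pow_eq_monomial]
      have hsmulQ : ∀ (x : K) (q : K[X] ⧸ I), x • q = π (Polynomial.C x) * q := by
        intro x q
        obtain ⟨p', rfl⟩ := Ideal.Quotient.mkₐ_surjective K I q
        rw [← map_smul, Polynomial.smul_eq_C_mul, map_mul]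
      have heq : π (Polynomial.monomial j (r.coeff j)) * π (b 0)
          = (r.coeff j / c j) • π (b ((j : ℕ) : ZMod h)) := by
        rw [hπb j, hsmulQ]
        simp only [← map_pow, ← map_mul]
        congr 1
        have hcc : Polynomial.C (r.coeff j / c j) * Polynomial.C (c j)
            = Polynomial.C (r.coeff j) := by
          rw [← Polynomial.C_mul, div_mul_cancel₀ _ (hc0 j)]
        rw [hmon, ← hcc]
        ring
      rw [heq]
      exact Submodule.smul_mem _ _ (Submodule.subset_span ⟨_, rfl⟩)
    · rw [hπp, hr0, map_zero, zero_mul]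
      exact Submodule.zero_mem _
  -- the span statement
  have hspan : Submodule.span K (Set.range b) = Polynomial.degreeLT K d := by
    apply le_antisymm
    · rw [Submodule.span_le]
      rintro _ ⟨e, rfl⟩
      exact hbmem e
    · intro p hp
      have hpmem : π p ∈ Submodule.span K (Set.range fun e : ZMod h => π (b e)) := by
        rw [hspanQ]; exact Submodule.mem_top
      rw [Submodule.mem_span_range_iff_exists_fun] at hpmem
      obtain ⟨ξ, hξ⟩ := hpmem
      set q : K[X] := ∑ e : ZMod h, ξ e • b e with hqdef
      have hq : q ∈ Submodule.span K (Set.range b) :=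
        Submodule.sum_mem _ fun e _ =>
          Submodule.smul_mem _ _ (Submodule.subset_span ⟨e, rfl⟩)
      have hπq : π q = π p := by
        rw [hqdef, map_sum]
        simpa [map_smul] using hξ
      have hqd : q ∈ Polynomial.degreeLT K d :=
        Submodule.sum_mem _ fun e _ => Submodule.smul_mem _ _ (hbmem e)
      have hz : p - q = 0 :=
        hinj _ (Submodule.sub_mem _ hp hqd) (by rw [map_sub, hπq, sub_self])
      rw [show p = q from by rw [← sub_eq_zero]; exact hz]
      exact hq
  refine ⟨hspan, ?_⟩
  -- rank part
  set M : Matrix (Fin h) (Fin h) K :=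
    Matrix.of fun e f : Fin h =>
      ∏ i ∈ Finset.range (f : ℕ), a1 (((e : ℕ) : ZMod h) - (i : ℕ)) with hMdef
  -- coefficient extraction map
  set φ : K[X] →ₗ[K] (Fin h → K) := LinearMap.pi (fun f : Fin h => Polynomial.lcoeff K f) with hφdef
  have hcoeff : ∀ (e : ZMod h) (f : ℕ), f < h →
      (Apoly h a1 e).coeff f = ∏ i ∈ Finset.range f, a1 (e - (i : ℕ)) := by
    intro e f hf
    rw [Apoly, Polynomial.finset_sum_coeff, Finset.sum_eq_single f]
    · rw [Polynomial.coeff_C_mul, Polynomial.coeff_X_pow, if_pos rfl, mul_one]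
    · intro j _ hne
      rw [Polynomial.coeff_C_mul, Polynomial.coeff_X_pow,
        if_neg (fun hh => hne hh.symm), mul_zero]
    · intro hf'
      exact absurd (Finset.mem_range.mpr hf) hf'
  have hrow : ∀ e : Fin h, M e = φ (Apoly h a1 (((e : ℕ) : ZMod h))) := by
    intro e
    funext f
    show (∏ i ∈ Finset.range (f : ℕ), a1 (((e : ℕ) : ZMod h) - (i : ℕ)))
      = Polynomial.lcoeff K (f : ℕ) (Apoly h a1 (((e : ℕ) : ZMod h)))
    rw [Polynomial.lcoeff_apply, hcoeff _ _ f.isLt]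
  -- rank = finrank of row span
  have hrank : M.rank = Module.finrank K (Submodule.span K (Set.range fun e : Fin h => M e)) := by
    rw [← Matrix.rank_transpose, Matrix.rank_eq_finrank_span_cols]; rfl
  -- multiplication by delta
  set μ : K[X] →ₗ[K] K[X] := LinearMap.mulLeft K δ with hμdef
  have hμinj : Function.Injective μ := fun x y hxy => by
    have : δ * x = δ * y := hxy
    exact mul_left_cancel₀ hδ0 this
  have hsurjFin : Function.Surjective (fun e : Fin h => (((e : ℕ)) : ZMod h)) :=
    fun x => ⟨⟨x.val, ZMod.val_lt x⟩, ZMod.natCast_rightInverse x⟩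
  have hrangeA : (Set.range fun e : Fin h => Apoly h a1 (((e : ℕ) : ZMod h)))
      = μ '' (Set.range b) := by
    have h1 : (Set.range fun e : Fin h => Apoly h a1 (((e : ℕ) : ZMod h)))
        = Set.range (Apoly h a1) := hsurjFin.range_comp (Apoly h a1)
    rw [h1, ← Set.range_comp]
    exact congrArg Set.range (funext fun e => ((hmulb e).symm : Apoly h a1 e = δ * b e))
  have hrows : (Set.range fun e : Fin h => M e) = φ '' (μ '' (Set.range b)) := by
    rw [show (fun e : Fin h => M e)
        = ⇑φ ∘ (fun e : Fin h => Apoly h a1 (((e : ℕ) : ZMod h))) from funext hrow]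
    rw [Set.range_comp, hrangeA]
  -- span of rows
  have hspanrows : Submodule.span K (Set.range fun e : Fin h => M e)
      = Submodule.map φ (Submodule.map μ (Polynomial.degreeLT K d)) := by
    rw [hrows, Submodule.span_image, Submodule.span_image, hspan]
  -- finrank computations
  haveI hFDd : FiniteDimensional K (Polynomial.degreeLT K d) :=
    Module.Finite.equiv (Polynomial.degreeLTEquiv K d).symm
  have hfinμ : Module.finrank K (Submodule.map μ (Polynomial.degreeLT K d))
      = Module.finrank K (Polynomial.degreeLT K d) := by
    have hres : Function.Injective (μ.comp (Polynomial.degreeLT K d).subtype) := by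
      intro x y hxy
      exact Subtype.ext (hμinj (by exact hxy))
    have hrange : LinearMap.range (μ.comp (Polynomial.degreeLT K d).subtype)
        = Submodule.map μ (Polynomial.degreeLT K d) := by
      rw [LinearMap.range_comp, Submodule.range_subtype]
    rw [← hrange, LinearMap.finrank_range_of_inj hres]
  have hmaple : Submodule.map μ (Polynomial.degreeLT K d) ≤ Polynomial.degreeLT K h := by
    rintro _ ⟨p, hp, rfl⟩
    rw [Polynomial.mem_degreeLT]
    show (δ * p).degree < (h : ℕ)
    calc (δ * p).degree = δ.degree + p.degree := Polynomial.degree_mul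
      _ < δ.degree + Δ.degree := by
          refine WithBot.add_lt_add_left (fun hb => hδ0 (Polynomial.degree_eq_bot.mp hb)) ?_
          rw [hdegΔ]
          exact Polynomial.mem_degreeLT.mp hp
      _ = (cycPoly h a1).degree := by rw [← Polynomial.degree_mul, hmulΔ]
      _ = (h : ℕ) := cycPoly_degree a1 hpos hA
  haveI hFD : FiniteDimensional K (Polynomial.degreeLT K h) :=
    Module.Finite.equiv (Polynomial.degreeLTEquiv K h).symm
  haveI hFDmap : FiniteDimensional K (Submodule.map μ (Polynomial.degreeLT K d)) :=
    Submodule.finiteDimensional_of_le hmaple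
  have hφinj : ∀ p ∈ Polynomial.degreeLT K h, φ p = 0 → p = 0 := by
    intro p hp h0
    ext n
    by_cases hn : n < h
    · have := congrFun h0 ⟨n, hn⟩
      simpa [hφdef, Polynomial.lcoeff] using this
    · rw [Polynomial.coeff_eq_zero_of_degree_lt, Polynomial.coeff_zero]
      exact lt_of_lt_of_le (Polynomial.mem_degreeLT.mp hp) (by exact_mod_cast Nat.le_of_not_lt hn)
  have hfinφ : Module.finrank K (Submodule.map φ (Submodule.map μ (Polynomial.degreeLT K d)))
      = Module.finrank K (Submodule.map μ (Polynomial.degreeLT K d)) := by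
    set W := Submodule.map μ (Polynomial.degreeLT K d) with hWdef
    have hres : Function.Injective (φ.comp W.subtype) := by
      intro x y hxy
      have hsub : φ ((x : K[X]) - (y : K[X])) = 0 := by
        rw [map_sub]
        have : φ (x : K[X]) = φ (y : K[X]) := hxy
        rw [this, sub_self]
      have hmem : (x : K[X]) - (y : K[X]) ∈ Polynomial.degreeLT K h :=
        Submodule.sub_mem _ (hmaple x.2) (hmaple y.2)
      have := hφinj _ hmem hsub
      exact Subtype.ext (by rw [← sub_eq_zero]; exact this)
    have hrange : LinearMap.range (φ.comp W.subtype) = Submodule.map φ W := by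
      rw [LinearMap.range_comp, Submodule.range_subtype]
    rw [← hrange, LinearMap.finrank_range_of_inj hres]
  have hfinlt : Module.finrank K (Polynomial.degreeLT K d) = d := by
    rw [LinearEquiv.finrank_eq (Polynomial.degreeLTEquiv K d)]
    exact Module.finrank_fin_fun K
  rw [hrank, hspanrows, hfinφ, hfinμ, hfinlt]
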